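/- Let ζ be a primitive p^s-th root of unity over the finite field F of order q = 2^n, and let o = ord_{p^s}(q). If there exists t with q^t ≡ -1 (mod p^s), then [F(ζ + ζ^{-1}) : F] = o/2; otherwise [F(ζ + ζ^{-1}) : F] = o and F(ζ + ζ^{-1}) = F(ζ). -/

import Mathlib

open IntermediateField Polynomial

lemma aux_pow_eq_self_iff {F K : Type*} [Field F] [Fintype F] [Field K] [Algebra F K]
    {q r e : ℕ} (hr : Fact r.Prime) [CharP K r] (hqe : q = r ^ e) (he : e ≠ 0)
    (hF : Fintype.card F = q) (x : K) (hx : IsIntegral F x) (j : ℕ) :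
    Module.finrank F (IntermediateField.adjoin F {x}) ∣ j ↔ x ^ q ^ j = x := by
  classical
  haveI : FiniteDimensional F F⟮x⟯ := IntermediateField.adjoin.finiteDimensional hx
  haveI : Finite F⟮x⟯ := Module.finite_of_finite F
  haveI : Fintype F⟮x⟯ := Fintype.ofFinite _
  set d := Module.finrank F F⟮x⟯ with hd
  have hq1 : 1 < q := by
    rw [hqe]; exact Nat.one_lt_pow he hr.out.one_lt
  have hcard : Fintype.card F⟮x⟯ = q ^ d := by
    rw [← hF]; exact Module.card_eq_pow_finrank
  have hd0 : 0 < d := Module.finrank_pos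
  have hbase : x ^ q ^ d = x := by
    have := FiniteField.pow_card (AdjoinSimple.gen F x)
    rw [hcard] at this
    have := congrArg (algebraMap F⟮x⟯ K) this
    simpa [map_pow] using this
  have hiter : ∀ c : ℕ, x ^ q ^ (d * c) = x := by
    intro c
    induction c with
    | zero => simp
    | succ c ih => rw [Nat.mul_succ, pow_add, pow_mul, ih, hbase]
  have hbound : ∀ i : ℕ, 0 < i → x ^ q ^ i = x → d ≤ i := by
    intro i hipos hi
    have hall : ∀ y : F⟮x⟯, (y : K) ^ q ^ i = y := by
      let φ : K →ₐ[F] K :=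
        { toFun := fun y => y ^ q ^ i
          map_one' := one_pow _
          map_mul' := fun a b => mul_pow a b _
          map_zero' := zero_pow (by positivity)
          map_add' := fun a b => by
            simp only [hqe, ← pow_mul]
            exact add_pow_char_pow a b r (e * i)
          commutes' := fun a => by
            show ((algebraMap F K) a) ^ q ^ i = (algebraMap F K) a
            rw [← map_pow]
            congr 1
            have := FiniteField.pow_card_pow i a
            rwa [hF] at this }
      have hx' : x ∈ AlgHom.equalizer φ (AlgHom.id F K) := hi
      have hle : Algebra.adjoin F {x} ≤ AlgHom.equalizer φ (AlgHom.id F K) :=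
        Algebra.adjoin_le (Set.singleton_subset_iff.mpr hx')
      intro y
      have hy : (y : K) ∈ Algebra.adjoin F {x} := by
        rw [← IntermediateField.adjoin_simple_toSubalgebra_of_isAlgebraic hx.isAlgebraic]
        exact y.2
      exact hle hy
    have hcount : q ^ d ≤ q ^ i := by
      rw [← hcard]
      have hne : (X ^ q ^ i - X : K[X]) ≠ 0 :=
        FiniteField.X_pow_card_pow_sub_X_ne_zero K hipos.ne' hq1
      have hsub : (Finset.univ.image (fun y : F⟮x⟯ => (y : K))).val ⊆
          (X ^ q ^ i - X : K[X]).roots := by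
        intro z hz
        simp only [Finset.mem_val, Finset.mem_image] at hz
        obtain ⟨y, -, rfl⟩ := hz
        rw [mem_roots hne]
        simp [Polynomial.IsRoot, sub_eq_zero, hall y]
      have h1 := Polynomial.card_le_degree_of_subset_roots hsub
      rw [FiniteField.X_pow_card_pow_sub_X_natDegree_eq K hipos.ne' hq1] at h1
      calc Fintype.card F⟮x⟯
          = (Finset.univ.image (fun y : F⟮x⟯ => (y : K))).card := by
            rw [Finset.card_image_of_injective _ Subtype.val_injective, Finset.card_univ]
        _ ≤ q ^ i := h1
    exact (Nat.pow_le_pow_iff_right hq1).mp hcount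
  constructor
  · rintro ⟨c, rfl⟩; exact hiter c
  · intro hj
    have hmod : x ^ q ^ (j % d) = x := by
      have h2 : x ^ q ^ (d * (j / d) + j % d) = x := by rw [Nat.div_add_mod]; exact hj
      rwa [pow_add, pow_mul, hiter] at h2
    rcases Nat.eq_zero_or_pos (j % d) with h0 | hpos
    · exact Nat.dvd_of_mod_eq_zero h0
    · exact absurd (hbound _ hpos hmod) (Nat.not_le.mpr (Nat.mod_lt _ hd0))

lemma aux_sq_eq_one {p s : ℕ} (hp : p.Prime) (hpodd : Odd p) (hs : 1 ≤ s)
    (x : ZMod (p ^ s)) (hx : x ^ 2 = 1) : x = 1 ∨ x = -1 := by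
  have hp2 : p ≠ 2 := by rintro rfl; exact (Nat.not_odd_iff_even.mpr even_two) hpodd
  have hpZ : Prime (p : ℤ) := Nat.prime_iff_prime_int.mp hp
  obtain ⟨a, rfl⟩ := ZMod.intCast_surjective x
  have h0 : ((((a - 1) * (a + 1)) : ℤ) : ZMod (p ^ s)) = 0 := by
    push_cast
    ring_nf
    linear_combination hx
  rw [ZMod.intCast_zmod_eq_zero_iff_dvd] at h0
  push_cast at h0
  by_cases h1 : (p : ℤ) ∣ a - 1
  · left
    have h2 : ¬ (p : ℤ) ∣ a + 1 := by
      intro h2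
      have hd2 : (p : ℤ) ∣ 2 := by
        have := dvd_sub h2 h1
        simpa using this
      have : p ∣ 2 := Int.ofNat_dvd.mp (by exact_mod_cast hd2)
      rcases (Nat.prime_dvd_prime_iff_eq hp Nat.prime_two).mp this with rfl; exact hp2 rfl
    have h3 : ((p : ℤ)) ^ s ∣ a - 1 :=
      hpZ.pow_dvd_of_dvd_mul_left s h2 (by rwa [mul_comm] at h0)
    have : ((a - 1 : ℤ) : ZMod (p ^ s)) = 0 := by
      rw [ZMod.intCast_zmod_eq_zero_iff_dvd]; push_cast; exact h3
    push_cast at this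
    linear_combination this
  · right
    have h3 : ((p : ℤ)) ^ s ∣ a + 1 := hpZ.pow_dvd_of_dvd_mul_left s h1 h0
    have : ((a + 1 : ℤ) : ZMod (p ^ s)) = 0 := by
      rw [ZMod.intCast_zmod_eq_zero_iff_dvd]; push_cast; exact h3
    push_cast at this
    linear_combination this

/-- Let `ζ` be a primitive `p^s`-th root of unity over the finite field `F` of order
`q = 2^n` and `o = ord_{p^s}(q)`. If some power of `q` is `-1` mod `p^s` then
`[F(ζ+ζ⁻¹) : F] = o/2`; otherwise `[F(ζ+ζ⁻¹) : F] = o` and `F(ζ+ζ⁻¹) = F(ζ)`. -/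
theorem degree_adjoin_zeta_add_zeta_inv (p n s : ℕ) (hp : p.Prime) (hpodd : Odd p)
    (hn : 1 ≤ n) (hs : 1 ≤ s)
    (F K : Type*) [Field F] [Fintype F] [Field K] [Algebra F K]
    (q : ℕ) (hq : q = 2 ^ n) (hF : Fintype.card F = q)
    (ζ : K) (hζ : IsPrimitiveRoot ζ (p ^ s))
    (o : ℕ) (ho : o = orderOf ((q : ZMod (p ^ s)))) :
    ((∃ t : ℕ, (q : ZMod (p ^ s)) ^ t = -1) →
        Module.finrank F (IntermediateField.adjoin F {ζ + ζ⁻¹}) = o / 2) ∧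
    ((¬ ∃ t : ℕ, (q : ZMod (p ^ s)) ^ t = -1) →
        Module.finrank F (IntermediateField.adjoin F {ζ + ζ⁻¹}) = o ∧
          IntermediateField.adjoin F {ζ + ζ⁻¹} = IntermediateField.adjoin F {ζ}) := by
  have hps0 : p ^ s ≠ 0 := pow_ne_zero _ hp.pos.ne'
  have hp2 : p ≠ 2 := by rintro rfl; exact (Nat.not_odd_iff_even.mpr even_two) hpodd
  have hp3 : 2 < p := lt_of_le_of_ne hp.two_le (Ne.symm hp2)
  have hps2 : 2 < p ^ s := lt_of_lt_of_le hp3 (Nat.le_self_pow (by omega) p)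
  haveI : Fact (2 < p ^ s) := ⟨hps2⟩
  haveI : NeZero (p ^ s) := ⟨hps0⟩
  have hn0 : n ≠ 0 := by omega
  have hq1 : 1 < q := by rw [hq]; exact Nat.one_lt_pow hn0 one_lt_two
  -- characteristic 2
  have hF2 : ((2 : ℕ) : F) = 0 := by
    have h := FiniteField.cast_card_eq_zero F
    rw [hF, hq] at h
    push_cast at h
    have := pow_eq_zero_iff (n := n) hn0 |>.mp h
    exact_mod_cast this
  have hchar : ringChar F = 2 := by
    have hdvd : ringChar F ∣ 2 := ringChar.dvd hF2
    rcases (Nat.prime_two.eq_one_or_self_of_dvd _ hdvd) with h1 | h2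
    · exfalso
      have : ((1 : ℕ) : F) = 0 :=
        (CharP.cast_eq_zero_iff F (ringChar F) 1).mpr (by rw [h1])
      simpa using this
    · exact h2
  haveI hcharF : CharP F 2 := hchar ▸ ringChar.charP F
  haveI : CharP K 2 := charP_of_injective_algebraMap (algebraMap F K).injective 2
  have hζ0 : ζ ≠ 0 := hζ.ne_zero hps0
  have hζpow : ζ ^ (p ^ s) = 1 := hζ.pow_eq_one
  -- integrality
  have hζint : IsIntegral F ζ := by
    apply IsIntegral.of_pow (Nat.pos_of_ne_zero hps0)
    rw [hζpow]; exact isIntegral_one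
  have hinv : ζ⁻¹ = ζ ^ (p ^ s - 1) := by
    apply inv_eq_of_mul_eq_one_right
    rw [← pow_succ']
    have hsucc : p ^ s - 1 + 1 = p ^ s := Nat.succ_pred_eq_of_pos (Nat.pos_of_ne_zero hps0)
    rw [hsucc, hζpow]
  have hinvint : IsIntegral F ζ⁻¹ := hinv ▸ hζint.pow _
  have hβint : IsIntegral F (ζ + ζ⁻¹) := hζint.add hinvint
  have hrfact : Fact (Nat.Prime 2) := ⟨Nat.prime_two⟩
  have hzeta_iff := fun j => aux_pow_eq_self_iff hrfact hq hn0 hF ζ hζint j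
  have hbeta_iff := fun j => aux_pow_eq_self_iff hrfact hq hn0 hF (ζ + ζ⁻¹) hβint j
  -- translation to ZMod
  have hz_iff : ∀ j : ℕ, ζ ^ q ^ j = ζ ↔ ((q : ZMod (p ^ s))) ^ j = 1 := by
    intro j
    have h1 : 1 ≤ q ^ j := Nat.one_le_pow _ _ (by omega)
    have e1 : q ^ j - 1 + 1 = q ^ j := by omega
    have step : ζ ^ q ^ j = ζ ↔ ζ ^ (q ^ j - 1) = 1 := by
      constructor
      · intro h
        have h2 : ζ ^ (q ^ j - 1) * ζ = 1 * ζ := by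
          rw [← pow_succ, e1, h, one_mul]
        exact mul_right_cancel₀ hζ0 h2
      · intro h
        rw [← e1, pow_succ, h, one_mul]
    rw [step, hζ.pow_eq_one_iff_dvd]
    rw [← ZMod.natCast_eq_zero_iff]
    rw [Nat.cast_sub h1]
    push_cast
    rw [sub_eq_zero]
  have hz_iff' : ∀ j : ℕ, ζ ^ q ^ j = ζ⁻¹ ↔ ((q : ZMod (p ^ s))) ^ j = -1 := by
    intro j
    have step : ζ ^ q ^ j = ζ⁻¹ ↔ ζ ^ (q ^ j + 1) = 1 := by
      rw [pow_succ]
      constructor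
      · intro h; rw [h, inv_mul_cancel₀ hζ0]
      · intro h; exact eq_inv_of_mul_eq_one_left h
    rw [step, hζ.pow_eq_one_iff_dvd]
    rw [← ZMod.natCast_eq_zero_iff]
    push_cast
    rw [eq_neg_iff_add_eq_zero]
  have hfrob : ∀ j : ℕ, (ζ + ζ⁻¹) ^ q ^ j = ζ ^ q ^ j + (ζ ^ q ^ j)⁻¹ := by
    intro j
    have h2 : q ^ j = 2 ^ (n * j) := by rw [hq, pow_mul]
    rw [h2, add_pow_char_pow ζ ζ⁻¹ 2 (n * j), inv_pow]
  have hsum : ∀ u : K, u ≠ 0 → (u + u⁻¹ = ζ + ζ⁻¹ ↔ (u = ζ ∨ u = ζ⁻¹)) := by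
    intro u hu
    constructor
    · intro h
      have h2 : (u - ζ) * (u * ζ - 1) = 0 := by
        have h3 : u * (ζ * (u + u⁻¹)) = u * (ζ * (ζ + ζ⁻¹)) := by rw [h]
        field_simp at h3
        linear_combination h3
      rcases mul_eq_zero.mp h2 with h4 | h4
      · left; exact sub_eq_zero.mp h4
      · right
        have h5 : u * ζ = 1 := by linear_combination h4
        rw [← mul_one u, ← mul_inv_cancel₀ hζ0, ← mul_assoc, h5, one_mul]
    · rintro (rfl | rfl)
      · rfl
      · rw [inv_inv, add_comm]
  have hdq : ∀ j : ℕ, Module.finrank F (IntermediateField.adjoin F {ζ + ζ⁻¹}) ∣ j ↔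
      (((q : ZMod (p ^ s))) ^ j = 1 ∨ ((q : ZMod (p ^ s))) ^ j = -1) := by
    intro j
    rw [hbeta_iff j, hfrob j, ← hz_iff j, ← hz_iff' j]
    exact hsum _ (pow_ne_zero _ hζ0)
  have hdvd_o : ∀ j : ℕ, o ∣ j ↔ ((q : ZMod (p ^ s))) ^ j = 1 := fun j => by
    rw [ho]; exact orderOf_dvd_iff_pow_eq_one
  have hQo : ((q : ZMod (p ^ s))) ^ o = 1 := (hdvd_o o).mp dvd_rfl
  have hm_iff : ∀ j : ℕ, Module.finrank F (IntermediateField.adjoin F {ζ}) ∣ j ↔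
      ((q : ZMod (p ^ s))) ^ j = 1 := fun j => (hzeta_iff j).trans (hz_iff j)
  have hm : Module.finrank F (IntermediateField.adjoin F {ζ}) = o :=
    Nat.dvd_antisymm ((hm_iff o).mpr hQo) ((hdvd_o _).mpr ((hm_iff _).mp dvd_rfl))
  have hneg1 : ((-1 : ZMod (p ^ s))) ≠ 1 := ZMod.neg_one_ne_one
  constructor
  · rintro ⟨t, ht⟩
    have h2t : ((q : ZMod (p ^ s))) ^ (t * 2) = 1 := by
      rw [pow_mul, ht]; simp
    have hoeven : 2 ∣ o := by
      by_contra hodd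
      have hco : Nat.Coprime o 2 :=
        ((Nat.Prime.coprime_iff_not_dvd Nat.prime_two).mpr hodd).symm
      have hot : o ∣ t := hco.dvd_of_dvd_mul_right ((hdvd_o _).mpr h2t)
      have := (hdvd_o t).mp hot
      rw [ht] at this
      exact hneg1 this
    obtain ⟨u, hu⟩ := hoeven
    have hiff2 : ∀ j : ℕ, (((q : ZMod (p ^ s))) ^ j = 1 ∨ ((q : ZMod (p ^ s))) ^ j = -1) ↔
        o ∣ 2 * j := by
      intro j
      constructor
      · rintro (h | h)
        · exact Dvd.dvd.mul_left ((hdvd_o j).mpr h) 2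
        · rw [mul_comm, hdvd_o, pow_mul, h]
          simp
      · intro h
        have h2 : (((q : ZMod (p ^ s))) ^ j) ^ 2 = 1 := by
          rw [← pow_mul, ← hdvd_o]
          rwa [mul_comm] at h
        exact aux_sq_eq_one hp hpodd hs _ h2
    have hfinal : ∀ j : ℕ, Module.finrank F (IntermediateField.adjoin F {ζ + ζ⁻¹}) ∣ j ↔
        u ∣ j := by
      intro j
      rw [hdq j, hiff2 j, hu]
      exact Nat.mul_dvd_mul_iff_left (by norm_num : 0 < 2)
    have hfr : Module.finrank F (IntermediateField.adjoin F {ζ + ζ⁻¹}) = u :=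
      Nat.dvd_antisymm ((hfinal u).mpr dvd_rfl) ((hfinal _).mp dvd_rfl)
    rw [hfr, hu]
    omega
  · intro hne
    have hiff3 : ∀ j : ℕ, Module.finrank F (IntermediateField.adjoin F {ζ + ζ⁻¹}) ∣ j ↔
        o ∣ j := by
      intro j
      rw [hdq j, hdvd_o j]
      constructor
      · rintro (h | h)
        · exact h
        · exact absurd ⟨j, h⟩ hne
      · exact Or.inl
    have hd1 : ((q : ZMod (p ^ s))) ^
        (Module.finrank F (IntermediateField.adjoin F {ζ + ζ⁻¹})) = 1 := by
      rcases (hdq _).mp dvd_rfl with h | h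
      · exact h
      · exact absurd ⟨_, h⟩ hne
    have hdeq : Module.finrank F (IntermediateField.adjoin F {ζ + ζ⁻¹}) = o :=
      Nat.dvd_antisymm ((hiff3 o).mpr dvd_rfl) ((hdvd_o _).mpr hd1)
    refine ⟨hdeq, ?_⟩
    have hle : IntermediateField.adjoin F {ζ + ζ⁻¹} ≤ IntermediateField.adjoin F {ζ} := by
      rw [IntermediateField.adjoin_le_iff]
      intro z hz
      rw [Set.mem_singleton_iff] at hz
      subst hz
      exact add_mem (IntermediateField.mem_adjoin_simple_self F ζ)
        (inv_mem (IntermediateField.mem_adjoin_simple_self F ζ))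
    haveI : FiniteDimensional F (IntermediateField.adjoin F {ζ}) :=
      IntermediateField.adjoin.finiteDimensional hζint
    exact IntermediateField.eq_of_le_of_finrank_eq hle (by rw [hdeq, hm])
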